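/- arXiv:1903.04919 — 3 statements merged into one kernel-verified Lean document; each statement's English description precedes it below -/
import Mathlib

section
/- For the one-factor Poisson model with m variables, any critical point (λ̂, μ̂1, ..., μ̂m) of the likelihood L(λ, μ1, ..., μm) = e^{-n(λ+μ1+...+μm)} Π_{i=1}^n Σ_{u=0}^{min(y_{i1},...,y_{im})} (λ^u/u!) Π_{k=1}^m μ_k^{y_{ik}-u}/(y_{ik}-u)! with ∂L/∂λ = 0 and ∂L/∂μ_k = 0 satisfies ȳ_k = μ̂_k + λ̂ for each k = 1, ..., m, where ȳ_k = n^{-1} Σ_{i=1}^n y_{ik}. -/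
open Finset Real

/-- Likelihood of the one-factor Poisson model:
`L(λ,μ) = e^{-n(λ+Σμ_k)} Π_i Σ_{u=0}^{min_k y_{ik}} (λ^u/u!) Π_k μ_k^{y_{ik}-u}/(y_{ik}-u)!`. -/
noncomputable def factorLik {n m : ℕ} (y : Fin n → Fin m → ℕ) (lam : ℝ) (mu : Fin m → ℝ) : ℝ :=
  Real.exp (-(n : ℝ) * (lam + ∑ k, mu k)) *
    ∏ i, ∑ u ∈ Finset.range ((⨅ k, y i k) + 1),
      lam ^ u / (Nat.factorial u) *
        ∏ k, mu k ^ (y i k - u) / (Nat.factorial (y i k - u))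

namespace OneFactorAux

variable {n m : ℕ}

/-- The `u`-th summand of the `i`-th factor. -/
noncomputable def aa (y : Fin n → Fin m → ℕ) (lam : ℝ) (mu : Fin m → ℝ) (i : Fin n) (u : ℕ) : ℝ :=
  lam ^ u / (Nat.factorial u) * ∏ k, mu k ^ (y i k - u) / (Nat.factorial (y i k - u))

/-- The `i`-th factor of the likelihood. -/
noncomputable def SS (y : Fin n → Fin m → ℕ) (lam : ℝ) (mu : Fin m → ℝ) (i : Fin n) : ℝ :=
  ∑ u ∈ Finset.range ((⨅ k, y i k) + 1), aa y lam mu i u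

lemma factorLik_eq (y : Fin n → Fin m → ℕ) (lam : ℝ) (mu : Fin m → ℝ) :
    factorLik y lam mu = Real.exp (-(n : ℝ) * (lam + ∑ k, mu k)) * ∏ i, SS y lam mu i := rfl

lemma aa_pos (y : Fin n → Fin m → ℕ) {lam : ℝ} {mu : Fin m → ℝ} (hlam : 0 < lam)
    (hmu : ∀ k, 0 < mu k) (i : Fin n) (u : ℕ) : 0 < aa y lam mu i u := by
  unfold aa
  have h1 : 0 < lam ^ u / (Nat.factorial u : ℝ) := by positivity
  have h2 : 0 < ∏ k, mu k ^ (y i k - u) / (Nat.factorial (y i k - u) : ℝ) := by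
    apply Finset.prod_pos
    intro k _
    have := hmu k
    positivity
  exact mul_pos h1 h2

lemma SS_pos (y : Fin n → Fin m → ℕ) {lam : ℝ} {mu : Fin m → ℝ} (hlam : 0 < lam)
    (hmu : ∀ k, 0 < mu k) (i : Fin n) : 0 < SS y lam mu i :=
  Finset.sum_pos (fun u _ => aa_pos y hlam hmu i u) Finset.nonempty_range_add_one

/-- Derivative of `SS` w.r.t. `λ`. -/
noncomputable def Dlam (y : Fin n → Fin m → ℕ) (lam : ℝ) (mu : Fin m → ℝ) (i : Fin n) : ℝ :=
  ∑ u ∈ Finset.range ((⨅ k, y i k) + 1),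
    (u : ℝ) * lam ^ (u - 1) / (Nat.factorial u) *
      ∏ k, mu k ^ (y i k - u) / (Nat.factorial (y i k - u))

lemma hasDerivAt_SS_lam (y : Fin n → Fin m → ℕ) (lam : ℝ) (mu : Fin m → ℝ) (i : Fin n) :
    HasDerivAt (fun l => SS y l mu i) (Dlam y lam mu i) lam := by
  unfold SS aa Dlam
  exact HasDerivAt.fun_sum fun u _ => ((hasDerivAt_pow u lam).div_const _).mul_const _

/-- Derivative of `SS` w.r.t. `μ_k`. -/
noncomputable def Dmu (y : Fin n → Fin m → ℕ) (lam : ℝ) (mu : Fin m → ℝ) (k : Fin m)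
    (i : Fin n) : ℝ :=
  ∑ u ∈ Finset.range ((⨅ k, y i k) + 1),
    lam ^ u / (Nat.factorial u) *
      (((y i k - u : ℕ) : ℝ) * mu k ^ (y i k - u - 1) / (Nat.factorial (y i k - u)) *
        ∏ l ∈ Finset.univ.erase k, mu l ^ (y i l - u) / (Nat.factorial (y i l - u)))

lemma prod_split (y : Fin n → Fin m → ℕ) (mu : Fin m → ℝ) (k : Fin m) (i : Fin n) (u : ℕ) :
    (∏ l, mu l ^ (y i l - u) / (Nat.factorial (y i l - u) : ℝ)) =
      mu k ^ (y i k - u) / (Nat.factorial (y i k - u) : ℝ) *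
        ∏ l ∈ Finset.univ.erase k, mu l ^ (y i l - u) / (Nat.factorial (y i l - u) : ℝ) :=
  (Finset.mul_prod_erase Finset.univ _ (Finset.mem_univ k)).symm

lemma aa_update (y : Fin n → Fin m → ℕ) (lam : ℝ) (mu : Fin m → ℝ) (k : Fin m) (i : Fin n)
    (u : ℕ) (t : ℝ) :
    aa y lam (Function.update mu k t) i u =
      lam ^ u / (Nat.factorial u) *
        (t ^ (y i k - u) / (Nat.factorial (y i k - u)) *
          ∏ l ∈ Finset.univ.erase k, mu l ^ (y i l - u) / (Nat.factorial (y i l - u))) := by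
  unfold aa
  rw [prod_split y (Function.update mu k t) k i u, Function.update_self]
  congr 2
  refine Finset.prod_congr rfl fun l hl => ?_
  rw [Function.update_of_ne (Finset.ne_of_mem_erase hl)]

lemma hasDerivAt_SS_mu (y : Fin n → Fin m → ℕ) (lam : ℝ) (mu : Fin m → ℝ) (k : Fin m)
    (i : Fin n) :
    HasDerivAt (fun t => SS y lam (Function.update mu k t) i) (Dmu y lam mu k i) (mu k) := by
  have hfun : (fun t => SS y lam (Function.update mu k t) i) =
      fun t => ∑ u ∈ Finset.range ((⨅ k, y i k) + 1),
        lam ^ u / (Nat.factorial u) *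
          (t ^ (y i k - u) / (Nat.factorial (y i k - u)) *
            ∏ l ∈ Finset.univ.erase k, mu l ^ (y i l - u) / (Nat.factorial (y i l - u))) := by
    funext t
    exact Finset.sum_congr rfl fun u _ => aa_update y lam mu k i u t
  rw [hfun]
  unfold Dmu
  exact HasDerivAt.fun_sum fun u _ =>
    ((((hasDerivAt_pow _ _).div_const _).mul_const _).const_mul _)

lemma key_identity (hm : 0 < m) (y : Fin n → Fin m → ℕ) (lam : ℝ) (mu : Fin m → ℝ)
    (k : Fin m) (i : Fin n) :
    lam * Dlam y lam mu i + mu k * Dmu y lam mu k i = (y i k : ℝ) * SS y lam mu i := by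
  haveI : Nonempty (Fin m) := ⟨⟨0, hm⟩⟩
  unfold Dlam Dmu SS
  rw [Finset.mul_sum, Finset.mul_sum, ← Finset.sum_add_distrib, Finset.mul_sum]
  refine Finset.sum_congr rfl fun u hu => ?_
  have hu' : u ≤ y i k := le_trans (Nat.lt_succ_iff.mp (Finset.mem_range.mp hu))
    (ciInf_le (OrderBot.bddBelow _) k)
  have h1 : lam * ((u : ℝ) * lam ^ (u - 1) / (Nat.factorial u) *
      ∏ l, mu l ^ (y i l - u) / (Nat.factorial (y i l - u) : ℝ)) =
      (u : ℝ) * aa y lam mu i u := by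
    unfold aa
    cases u with
    | zero => simp
    | succ v => rw [Nat.succ_sub_one, pow_succ]; push_cast; ring
  have h2 : mu k * (lam ^ u / (Nat.factorial u) *
      (((y i k - u : ℕ) : ℝ) * mu k ^ (y i k - u - 1) / (Nat.factorial (y i k - u)) *
        ∏ l ∈ Finset.univ.erase k, mu l ^ (y i l - u) / (Nat.factorial (y i l - u) : ℝ))) =
      ((y i k - u : ℕ) : ℝ) * aa y lam mu i u := by
    unfold aa
    rw [prod_split y mu k i u]
    cases h : y i k - u with
    | zero => simp [h]
    | succ v => rw [Nat.succ_sub_one, pow_succ]; push_cast; ring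
  rw [h1, h2, ← add_mul]
  congr 1
  have : ((u : ℝ) + ((y i k - u : ℕ) : ℝ)) = ((u + (y i k - u) : ℕ) : ℝ) := by push_cast; ring
  rw [this, Nat.add_sub_cancel' hu']

end OneFactorAux

open OneFactorAux in
/-- Any critical point `(λ̂, μ̂)` of the one-factor Poisson likelihood satisfies
`ȳ_k = μ̂_k + λ̂` for every `k`, where `ȳ_k = n⁻¹ Σ_i y_{ik}`. -/
theorem ml_equations_one_factor_poisson
    {n m : ℕ} (hn : 0 < n) (hm : 0 < m) (y : Fin n → Fin m → ℕ)
    (hy : ∃ i, y i ⟨0, hm⟩ ≠ ⨅ k, y i k)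
    (lam : ℝ) (mu : Fin m → ℝ) (hlam : 0 < lam) (hmu : ∀ k, 0 < mu k)
    (hcritLam : deriv (fun l => factorLik y l mu) lam = 0)
    (hcritMu : ∀ k, deriv (fun t => factorLik y lam (Function.update mu k t)) (mu k) = 0) :
    ∀ k, (∑ i, (y i k : ℝ)) / n = mu k + lam := by
  intro k
  set P : ℝ := ∏ i, SS y lam mu i with hP_def
  have hP : 0 < P := Finset.prod_pos fun i _ => SS_pos y hlam hmu i
  have hE : (0 : ℝ) < Real.exp (-(n : ℝ) * (lam + ∑ k, mu k)) := Real.exp_pos _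
  -- the λ equation
  have hfunL : (fun l => factorLik y l mu) =
      fun l => Real.exp (-(n : ℝ) * (l + ∑ k, mu k)) * ∏ i, SS y l mu i := by
    funext l; exact factorLik_eq y l mu
  have hexpL : HasDerivAt (fun l : ℝ => Real.exp (-(n : ℝ) * (l + ∑ k, mu k)))
      (-(n : ℝ) * Real.exp (-(n : ℝ) * (lam + ∑ k, mu k))) lam := by
    have h1 : HasDerivAt (fun l : ℝ => -(n : ℝ) * (l + ∑ k, mu k)) (-(n : ℝ)) lam := by
      simpa using ((hasDerivAt_id lam).add_const (∑ k, mu k)).const_mul (-(n : ℝ))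
    simpa [mul_comm] using h1.exp
  have hprodL : HasDerivAt (fun l => ∏ i, SS y l mu i)
      (∑ i, (∏ j ∈ Finset.univ.erase i, SS y lam mu j) * Dlam y lam mu i) lam := by
    simpa [smul_eq_mul] using
      HasDerivAt.fun_finsetProd (fun i (_ : i ∈ Finset.univ) => hasDerivAt_SS_lam y lam mu i)
  have hdL : HasDerivAt (fun l => factorLik y l mu)
      (-(n : ℝ) * Real.exp (-(n : ℝ) * (lam + ∑ k, mu k)) * P +
        Real.exp (-(n : ℝ) * (lam + ∑ k, mu k)) *
          ∑ i, (∏ j ∈ Finset.univ.erase i, SS y lam mu j) * Dlam y lam mu i) lam := by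
    rw [hfunL]
    exact hexpL.mul hprodL
  rw [hdL.deriv] at hcritLam
  have EqLam : (∑ i, (∏ j ∈ Finset.univ.erase i, SS y lam mu j) * Dlam y lam mu i) =
      (n : ℝ) * P := by
    have h2 : Real.exp (-(n : ℝ) * (lam + ∑ k, mu k)) *
        ((∑ i, (∏ j ∈ Finset.univ.erase i, SS y lam mu j) * Dlam y lam mu i) - (n : ℝ) * P)
          = 0 := by linear_combination hcritLam
    rcases mul_eq_zero.mp h2 with h | h
    · exact absurd h hE.ne'
    · exact sub_eq_zero.mp h
  -- the μ_k equation
  have hsumU : ∀ t : ℝ, (∑ l, Function.update mu k t l) =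
      t + ∑ l ∈ Finset.univ.erase k, mu l := fun t => by
    rw [Finset.sum_update_of_mem (Finset.mem_univ k), Finset.sdiff_singleton_eq_erase]
  have hmuk_sum : mu k + ∑ l ∈ Finset.univ.erase k, mu l = ∑ l, mu l :=
    Finset.add_sum_erase Finset.univ mu (Finset.mem_univ k)
  have hexpM : HasDerivAt
      (fun t : ℝ => Real.exp (-(n : ℝ) * (lam + ∑ l, Function.update mu k t l)))
      (-(n : ℝ) * Real.exp (-(n : ℝ) * (lam + ∑ l, mu l))) (mu k) := by
    have hfun2 : (fun t : ℝ => Real.exp (-(n : ℝ) * (lam + ∑ l, Function.update mu k t l))) =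
        fun t : ℝ => Real.exp (-(n : ℝ) * (lam + (t + ∑ l ∈ Finset.univ.erase k, mu l))) := by
      funext t; rw [hsumU t]
    rw [hfun2]
    have h1 : HasDerivAt
        (fun t : ℝ => -(n : ℝ) * (lam + (t + ∑ l ∈ Finset.univ.erase k, mu l)))
        (-(n : ℝ)) (mu k) := by
      simpa using
        (((hasDerivAt_id (mu k)).add_const (∑ l ∈ Finset.univ.erase k, mu l)).const_add
          lam).const_mul (-(n : ℝ))
    have := h1.exp
    rw [show lam + (mu k + ∑ l ∈ Finset.univ.erase k, mu l) = lam + ∑ l, mu l by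
      rw [hmuk_sum]] at this
    simpa [mul_comm] using this
  have hprodM : HasDerivAt (fun t => ∏ i, SS y lam (Function.update mu k t) i)
      (∑ i, (∏ j ∈ Finset.univ.erase i, SS y lam mu j) * Dmu y lam mu k i) (mu k) := by
    have := HasDerivAt.fun_finsetProd
      (fun i (_ : i ∈ Finset.univ) => hasDerivAt_SS_mu y lam mu k i)
    simpa [smul_eq_mul, Function.update_eq_self] using this
  have hdM : HasDerivAt (fun t => factorLik y lam (Function.update mu k t))
      (-(n : ℝ) * Real.exp (-(n : ℝ) * (lam + ∑ l, mu l)) * P +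
        Real.exp (-(n : ℝ) * (lam + ∑ l, mu l)) *
          ∑ i, (∏ j ∈ Finset.univ.erase i, SS y lam mu j) * Dmu y lam mu k i) (mu k) := by
    have hfun3 : (fun t => factorLik y lam (Function.update mu k t)) =
        fun t => Real.exp (-(n : ℝ) * (lam + ∑ l, Function.update mu k t l)) *
          ∏ i, SS y lam (Function.update mu k t) i := by
      funext t; exact factorLik_eq y lam (Function.update mu k t)
    rw [hfun3]
    have := hexpM.mul hprodM
    simpa [Function.update_eq_self, Pi.mul_def, hP_def] using this
  have hcM := hcritMu k
  rw [hdM.deriv] at hcM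
  have EqMu : (∑ i, (∏ j ∈ Finset.univ.erase i, SS y lam mu j) * Dmu y lam mu k i) =
      (n : ℝ) * P := by
    have h2 : Real.exp (-(n : ℝ) * (lam + ∑ l, mu l)) *
        ((∑ i, (∏ j ∈ Finset.univ.erase i, SS y lam mu j) * Dmu y lam mu k i) - (n : ℝ) * P)
          = 0 := by linear_combination hcM
    rcases mul_eq_zero.mp h2 with h | h
    · exact absurd h (Real.exp_pos _).ne'
    · exact sub_eq_zero.mp h
  -- combine
  have main : (∑ i, (y i k : ℝ)) * P = (lam + mu k) * ((n : ℝ) * P) := by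
    calc (∑ i, (y i k : ℝ)) * P
        = ∑ i, (∏ j ∈ Finset.univ.erase i, SS y lam mu j) *
            (lam * Dlam y lam mu i + mu k * Dmu y lam mu k i) := by
          rw [Finset.sum_mul]
          refine Finset.sum_congr rfl fun i _ => ?_
          rw [key_identity hm y lam mu k i,
            show P = SS y lam mu i * ∏ j ∈ Finset.univ.erase i, SS y lam mu j from
              (Finset.mul_prod_erase Finset.univ _ (Finset.mem_univ i)).symm]
          ring
      _ = lam * (∑ i, (∏ j ∈ Finset.univ.erase i, SS y lam mu j) * Dlam y lam mu i) +
            mu k * (∑ i, (∏ j ∈ Finset.univ.erase i, SS y lam mu j) * Dmu y lam mu k i) := by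
          rw [Finset.mul_sum, Finset.mul_sum, ← Finset.sum_add_distrib]
          exact Finset.sum_congr rfl fun i _ => by ring
      _ = (lam + mu k) * ((n : ℝ) * P) := by rw [EqLam, EqMu]; ring
  have hsum : (∑ i, (y i k : ℝ)) = (n : ℝ) * (mu k + lam) := by
    have := mul_right_cancel₀ hP.ne' (by linarith [main] :
      (∑ i, (y i k : ℝ)) * P = ((n : ℝ) * (mu k + lam)) * P)
    exact this
  have hn' : (n : ℝ) ≠ 0 := Nat.cast_ne_zero.mpr hn.ne'
  rw [hsum]
  field_simp
end

section
/- For each k, ∂L/∂μ_k evaluated at a point where ∂L/∂λ = 0 equals (nL/μ_k)(ȳ_k − μ_k − λ), where L is the Poisson factor model likelihood L(λ, μ1, ..., μm) = e^{-n(λ+Σμ_j)} Π_{i=1}^n Σ_{u=0}^{z_i} (λ^u/u!) Π_{j=1}^m μ_j^{y_{ij}-u}/(y_{ij}-u)!. -/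
open Finset Real

/-- `u λ^u = λ · (u λ^{u-1})`, valid for all reals and naturals. -/
lemma aux_pow_key (x : ℝ) (p : ℕ) : x * ((p : ℝ) * x ^ (p - 1)) = (p : ℝ) * x ^ p := by
  cases p with
  | zero => simp
  | succ q => simp [pow_succ]; ring

/-- At any point where `∂L/∂λ = 0`, the partial derivative `∂L/∂μ_k` equals
`(nL/μ_k)(ȳ_k − μ_k − λ)`, where `ȳ_k = n⁻¹ Σ_i y_{ik}`. -/
theorem partial_mu_at_lambda_critical
    {n m : ℕ} (hn : 0 < n) (hm : 0 < m) (y : Fin n → Fin m → ℕ)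
    (lam : ℝ) (mu : Fin m → ℝ) (hlam : 0 < lam) (hmu : ∀ k, 0 < mu k)
    (hcritLam : deriv (fun l => factorLik y l mu) lam = 0) (k : Fin m) :
    deriv (fun t => factorLik y lam (Function.update mu k t)) (mu k)
      = (n * factorLik y lam mu / mu k) * ((∑ i, (y i k : ℝ)) / n - mu k - lam) := by
  classical
  -- Abbreviations
  set z : Fin n → ℕ := fun i => (⨅ j, y i j) + 1 with hzdef
  have hz : ∀ i u, u ∈ Finset.range (z i) → u ≤ y i k := by
    intro i u hu
    have h1 : u ≤ ⨅ j, y i j := Nat.lt_succ_iff.mp (Finset.mem_range.mp hu)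
    exact le_trans h1 (ciInf_le' _ k)
  set C : Fin n → ℕ → ℝ :=
    fun i u => ∏ j, mu j ^ (y i j - u) / (Nat.factorial (y i j - u)) with hCdef
  set R : Fin n → ℕ → ℝ :=
    fun i u => ∏ j ∈ Finset.univ.erase k, mu j ^ (y i j - u) / (Nat.factorial (y i j - u))
    with hRdef
  have hCR : ∀ i u, C i u = mu k ^ (y i k - u) / (Nat.factorial (y i k - u)) * R i u := by
    intro i u
    simp only [hCdef, hRdef]
    exact (Finset.mul_prod_erase Finset.univ _ (Finset.mem_univ k)).symm
  set S : Fin n → ℝ :=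
    fun i => ∑ u ∈ Finset.range (z i), lam ^ u / (Nat.factorial u) * C i u with hSdef
  set P : ℝ := ∏ i, S i with hPdef
  set E : ℝ := Real.exp (-(n : ℝ) * (lam + ∑ j, mu j)) with hEdef
  set D : Fin n → ℝ :=
    fun i => ∑ u ∈ Finset.range (z i),
      (u : ℝ) * lam ^ (u - 1) / (Nat.factorial u) * C i u with hDdef
  set M : Fin n → ℝ :=
    fun i => ∑ u ∈ Finset.range (z i),
      lam ^ u / (Nat.factorial u) *
        (((y i k - u : ℕ) : ℝ) * mu k ^ (y i k - u - 1) / (Nat.factorial (y i k - u)) * R i u)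
    with hMdef
  have hLeq : factorLik y lam mu = E * P := rfl
  -- the λ-derivative
  have hderivLam : HasDerivAt (fun l => factorLik y l mu)
      (E * (-(n : ℝ)) * P + E * ∑ i, (∏ j ∈ Finset.univ.erase i, S j) * D i) lam := by
    have hexp : HasDerivAt (fun l : ℝ => Real.exp (-(n : ℝ) * (l + ∑ j, mu j)))
        (E * (-(n : ℝ))) lam := by
      have h1 : HasDerivAt (fun l : ℝ => -(n : ℝ) * (l + ∑ j, mu j)) (-(n : ℝ)) lam := by
        simpa using ((hasDerivAt_id lam).add_const (∑ j, mu j)).const_mul (-(n : ℝ))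
      exact h1.exp
    have hprod : HasDerivAt (fun l : ℝ => ∏ i, ∑ u ∈ Finset.range (z i),
        l ^ u / (Nat.factorial u) * C i u)
        (∑ i, (∏ j ∈ Finset.univ.erase i, S j) * D i) lam := by
      have := HasDerivAt.fun_finsetProd (u := Finset.univ)
        (f := fun i (l : ℝ) => ∑ u ∈ Finset.range (z i), l ^ u / (Nat.factorial u) * C i u)
        (f' := D) (x := lam) ?_
      · simpa [smul_eq_mul] using this
      · intro i _
        apply HasDerivAt.fun_sum
        intro u _
        exact ((hasDerivAt_pow u lam).div_const _).mul_const _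
    exact hexp.mul hprod
  have hcrit : E * ∑ i, (∏ j ∈ Finset.univ.erase i, S j) * D i = (n : ℝ) * (E * P) := by
    have h0 := hderivLam.deriv
    rw [hcritLam] at h0
    nlinarith [h0]
  -- the μ_k-direction function, rewritten explicitly
  have hgmu : (fun t => factorLik y lam (Function.update mu k t))
      = fun t => Real.exp (-(n : ℝ) * (lam + (t + ∑ j ∈ Finset.univ.erase k, mu j))) *
          ∏ i, ∑ u ∈ Finset.range (z i),
            lam ^ u / (Nat.factorial u) *
              (t ^ (y i k - u) / (Nat.factorial (y i k - u)) * R i u) := by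
    funext t
    simp only [factorLik]
    congr 1
    · congr 2
      rw [Finset.sum_update_of_mem (Finset.mem_univ k), Finset.sdiff_singleton_eq_erase]
    · apply Finset.prod_congr rfl
      intro i _
      apply Finset.sum_congr rfl
      intro u _
      congr 1
      rw [← Finset.mul_prod_erase Finset.univ _ (Finset.mem_univ k)]
      rw [Function.update_self]
      congr 1
      apply Finset.prod_congr rfl
      intro j hj
      rw [Function.update_of_ne (Finset.mem_erase.mp hj).1]
  -- the μ_k-derivative
  have hderivMu : HasDerivAt (fun t => factorLik y lam (Function.update mu k t))
      (E * (-(n : ℝ)) * P + E * ∑ i, (∏ j ∈ Finset.univ.erase i, S j) * M i) (mu k) := by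
    rw [hgmu]
    have hsum : mu k + ∑ j ∈ Finset.univ.erase k, mu j = ∑ j, mu j :=
      Finset.add_sum_erase Finset.univ mu (Finset.mem_univ k)
    have hSval : ∀ i, (∑ u ∈ Finset.range (z i),
        lam ^ u / (Nat.factorial u) *
          (mu k ^ (y i k - u) / (Nat.factorial (y i k - u)) * R i u)) = S i := by
      intro i
      apply Finset.sum_congr rfl
      intro u _
      rw [hCR i u]
    have hexp : HasDerivAt
        (fun t : ℝ => Real.exp (-(n : ℝ) * (lam + (t + ∑ j ∈ Finset.univ.erase k, mu j))))
        (E * (-(n : ℝ))) (mu k) := by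
      have h1 : HasDerivAt
          (fun t : ℝ => -(n : ℝ) * (lam + (t + ∑ j ∈ Finset.univ.erase k, mu j)))
          (-(n : ℝ)) (mu k) := by
        have := (((hasDerivAt_id (mu k)).add_const
          (∑ j ∈ Finset.univ.erase k, mu j)).const_add lam).const_mul (-(n : ℝ))
        simpa using this
      have h2 := h1.exp
      have h3 : lam + (mu k + ∑ j ∈ Finset.univ.erase k, mu j) = lam + ∑ j, mu j := by
        rw [hsum]
      simpa [h3, hEdef] using h2
    have hprod : HasDerivAt (fun t : ℝ => ∏ i, ∑ u ∈ Finset.range (z i),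
        lam ^ u / (Nat.factorial u) *
          (t ^ (y i k - u) / (Nat.factorial (y i k - u)) * R i u))
        (∑ i, (∏ j ∈ Finset.univ.erase i, ∑ u ∈ Finset.range (z j),
          lam ^ u / (Nat.factorial u) *
            (mu k ^ (y j k - u) / (Nat.factorial (y j k - u)) * R j u)) * M i) (mu k) := by
      have := HasDerivAt.fun_finsetProd (u := Finset.univ)
        (f := fun i (t : ℝ) => ∑ u ∈ Finset.range (z i),
          lam ^ u / (Nat.factorial u) *
            (t ^ (y i k - u) / (Nat.factorial (y i k - u)) * R i u))
        (f' := M) (x := mu k) ?_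
      · simpa [smul_eq_mul] using this
      · intro i _
        apply HasDerivAt.fun_sum
        intro u _
        exact (((hasDerivAt_pow (y i k - u) (mu k)).div_const _).mul_const _).const_mul _
    have H := hexp.mul hprod
    simp only [hSval] at H
    have h4 : (-(n : ℝ)) * (lam + (mu k + ∑ j ∈ Finset.univ.erase k, mu j))
        = -(n : ℝ) * (lam + ∑ j, mu j) := by rw [hsum]
    rw [h4] at H
    exact H
  -- key identity: μ_k · M i = y_{ik} · S i − λ · D i
  have hMkey : ∀ i, mu k * M i = (y i k : ℝ) * S i - lam * D i := by
    intro i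
    simp only [hMdef, hSdef, hDdef, Finset.mul_sum, ← Finset.sum_sub_distrib]
    apply Finset.sum_congr rfl
    intro u hu
    have hyu : u ≤ y i k := hz i u hu
    have hcast : ((y i k - u : ℕ) : ℝ) = (y i k : ℝ) - (u : ℝ) := by
      push_cast [Nat.cast_sub hyu]; ring
    have h1 : mu k * (((y i k - u : ℕ) : ℝ) * mu k ^ (y i k - u - 1))
        = ((y i k - u : ℕ) : ℝ) * mu k ^ (y i k - u) := aux_pow_key (mu k) _
    have h2 : lam * ((u : ℝ) * lam ^ (u - 1)) = (u : ℝ) * lam ^ u := aux_pow_key lam u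
    rw [hCR i u]
    have e1 : mu k * (lam ^ u / (Nat.factorial u) *
        (((y i k - u : ℕ) : ℝ) * mu k ^ (y i k - u - 1) / (Nat.factorial (y i k - u)) * R i u))
        = (mu k * (((y i k - u : ℕ) : ℝ) * mu k ^ (y i k - u - 1))) *
          (lam ^ u / (Nat.factorial u) * R i u / (Nat.factorial (y i k - u))) := by ring
    have e2 : lam * ((u : ℝ) * lam ^ (u - 1) / (Nat.factorial u) *
        (mu k ^ (y i k - u) / (Nat.factorial (y i k - u)) * R i u))
        = (lam * ((u : ℝ) * lam ^ (u - 1))) *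
          (mu k ^ (y i k - u) / (Nat.factorial (y i k - u)) * R i u / (Nat.factorial u)) := by
      ring
    rw [e1, h1, e2, h2, hcast]
    ring
  -- assemble
  have hSP : ∀ i, S i * ∏ j ∈ Finset.univ.erase i, S j = P :=
    fun i => Finset.mul_prod_erase Finset.univ S (Finset.mem_univ i)
  have hsumM : mu k * (E * ∑ i, (∏ j ∈ Finset.univ.erase i, S j) * M i)
      = E * P * (∑ i, (y i k : ℝ)) - lam * ((n : ℝ) * (E * P)) := by
    have h1 : ∀ i, mu k * ((∏ j ∈ Finset.univ.erase i, S j) * M i)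
        = (y i k : ℝ) * P - lam * ((∏ j ∈ Finset.univ.erase i, S j) * D i) := by
      intro i
      have := hMkey i
      calc mu k * ((∏ j ∈ Finset.univ.erase i, S j) * M i)
          = (∏ j ∈ Finset.univ.erase i, S j) * (mu k * M i) := by ring
        _ = (∏ j ∈ Finset.univ.erase i, S j) * ((y i k : ℝ) * S i - lam * D i) := by rw [this]
        _ = (y i k : ℝ) * (S i * ∏ j ∈ Finset.univ.erase i, S j)
            - lam * ((∏ j ∈ Finset.univ.erase i, S j) * D i) := by ring
        _ = (y i k : ℝ) * P - lam * ((∏ j ∈ Finset.univ.erase i, S j) * D i) := by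
            rw [hSP i]
    calc mu k * (E * ∑ i, (∏ j ∈ Finset.univ.erase i, S j) * M i)
        = E * ∑ i, mu k * ((∏ j ∈ Finset.univ.erase i, S j) * M i) := by
          simp only [Finset.mul_sum]
          exact Finset.sum_congr rfl fun i _ => by ring
      _ = E * ∑ i, ((y i k : ℝ) * P - lam * ((∏ j ∈ Finset.univ.erase i, S j) * D i)) := by
          rw [Finset.sum_congr rfl fun i _ => h1 i]
      _ = E * ((∑ i, (y i k : ℝ)) * P)
          - lam * (E * ∑ i, (∏ j ∈ Finset.univ.erase i, S j) * D i) := by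
          rw [Finset.sum_sub_distrib, ← Finset.sum_mul, ← Finset.mul_sum]; ring
      _ = E * P * (∑ i, (y i k : ℝ)) - lam * ((n : ℝ) * (E * P)) := by rw [hcrit]; ring
  rw [hderivMu.deriv, hLeq]
  have hmk : mu k ≠ 0 := ne_of_gt (hmu k)
  have hnn : (n : ℝ) ≠ 0 := Nat.cast_ne_zero.mpr hn.ne'
  field_simp
  nlinarith [hsumM, sq_nonneg (mu k)]
end

section
/- For the truncated Poisson distribution with rate λ > 0 and truncation point A ≥ 1, the variance is strictly less than the mean: Var(Y) < E[Y]. -/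
open Finset

noncomputable def tp (lam : ℝ) (j : ℕ) : ℝ := lam ^ j / (Nat.factorial j)

lemma tp_pos {lam : ℝ} (hlam : 0 < lam) (j : ℕ) : 0 < tp lam j := by
  unfold tp
  have : (0:ℝ) < j.factorial := by exact_mod_cast j.factorial_pos
  positivity

lemma tp_step {lam : ℝ} (i : ℕ) :
    ((i:ℝ) + 1) * tp lam (i + 1) = lam * tp lam i := by
  unfold tp
  rw [Nat.factorial_succ]
  have h : (0:ℝ) < i.factorial := by exact_mod_cast i.factorial_pos
  push_cast
  field_simp
  ring

lemma sum_shift {lam : ℝ} (n : ℕ) :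
    ∑ y ∈ range (n + 1), (y : ℝ) * tp lam y = lam * ∑ j ∈ range n, tp lam j := by
  rw [Finset.sum_range_succ']
  simp only [Nat.cast_zero, zero_mul, add_zero, Nat.cast_add, Nat.cast_one]
  rw [Finset.mul_sum]
  exact Finset.sum_congr rfl fun i _ => tp_step i

lemma sum_shift2 {lam : ℝ} (n : ℕ) :
    ∑ y ∈ range (n + 2), ((y : ℝ) ^ 2 - y) * tp lam y
      = lam ^ 2 * ∑ j ∈ range n, tp lam j := by
  rw [Finset.sum_range_succ']
  simp only [Nat.cast_zero, Nat.cast_add, Nat.cast_one]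
  have h1 : ∀ i ∈ range (n+1), (((i:ℝ)+1)^2 - ((i:ℝ)+1)) * tp lam (i+1)
      = lam * ((i:ℝ) * tp lam i) := by
    intro i _
    have h := tp_step (lam := lam) i
    calc (((i:ℝ)+1)^2 - ((i:ℝ)+1)) * tp lam (i+1)
        = (i:ℝ) * (((i:ℝ)+1) * tp lam (i+1)) := by ring
      _ = (i:ℝ) * (lam * tp lam i) := by rw [h]
      _ = lam * ((i:ℝ) * tp lam i) := by ring
  rw [Finset.sum_congr rfl h1, ← Finset.mul_sum, sum_shift]
  ring_nf

lemma tp_cross {lam : ℝ} (hlam : 0 < lam) {i n : ℕ} (hi : i ≤ n) :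
    tp lam i * tp lam (n + 1) ≤ tp lam (i + 1) * tp lam n := by
  have key : ((i+1).factorial * n.factorial : ℕ) ≤ i.factorial * (n+1).factorial := by
    rw [Nat.factorial_succ, Nat.factorial_succ]
    calc (i+1) * i.factorial * n.factorial = (i+1) * (i.factorial * n.factorial) := by ring
      _ ≤ (n+1) * (i.factorial * n.factorial) := Nat.mul_le_mul_right _ (by omega)
      _ = i.factorial * ((n+1) * n.factorial) := by ring
  have hif : (0:ℝ) < i.factorial := by exact_mod_cast i.factorial_pos
  have hnf : (0:ℝ) < n.factorial := by exact_mod_cast n.factorial_pos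
  have hif1 : (0:ℝ) < (i+1).factorial := by exact_mod_cast (i+1).factorial_pos
  have hnf1 : (0:ℝ) < (n+1).factorial := by exact_mod_cast (n+1).factorial_pos
  unfold tp
  rw [div_mul_div_comm, div_mul_div_comm, ← pow_add, ← pow_add]
  have he : (i + 1) + n = i + (n + 1) := by omega
  rw [he, div_le_div_iff₀ (by positivity) (by positivity)]
  have hkey : (((i+1).factorial * n.factorial : ℕ) : ℝ) ≤ ((i.factorial * (n+1).factorial : ℕ) : ℝ) := by
    exact_mod_cast key
  push_cast at hkey
  have hp : (0:ℝ) < lam ^ (i + (n+1)) := by positivity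
  nlinarith [mul_le_mul_of_nonneg_left hkey (le_of_lt hp)]

lemma logconcave {lam : ℝ} (hlam : 0 < lam) (n : ℕ) :
    (∑ j ∈ range n, tp lam j) * (∑ j ∈ range (n + 2), tp lam j)
      < (∑ j ∈ range (n + 1), tp lam j) ^ 2 := by
  set S0 := ∑ j ∈ range n, tp lam j with hS0
  have hS2 : ∑ j ∈ range (n + 2), tp lam j = (∑ j ∈ range (n+1), tp lam j) + tp lam (n+1) :=
    Finset.sum_range_succ _ _
  have hS1 : ∑ j ∈ range (n + 1), tp lam j = S0 + tp lam n := Finset.sum_range_succ _ _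
  -- key: S0 * tp (n+1) < S1 * tp n
  have hkey : S0 * tp lam (n + 1) < (∑ j ∈ range (n+1), tp lam j) * tp lam n := by
    have h1 : S0 * tp lam (n+1) = ∑ j ∈ range n, tp lam j * tp lam (n+1) := by
      rw [hS0, Finset.sum_mul]
    have h2 : (∑ j ∈ range (n+1), tp lam j) * tp lam n
        = ∑ j ∈ range (n+1), tp lam j * tp lam n := Finset.sum_mul _ _ _
    rw [h1, h2, Finset.sum_range_succ' (fun j => tp lam j * tp lam n) n]
    have h3 : ∑ j ∈ range n, tp lam j * tp lam (n+1)
        ≤ ∑ j ∈ range n, tp lam (j+1) * tp lam n := by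
      apply Finset.sum_le_sum
      intro i hi
      exact tp_cross hlam (le_of_lt (Finset.mem_range.mp hi))
    have h4 : 0 < tp lam 0 * tp lam n := mul_pos (tp_pos hlam 0) (tp_pos hlam n)
    linarith
  nlinarith [tp_pos hlam n, tp_pos hlam (n+1), Finset.sum_nonneg (fun j (_ : j ∈ range n) => le_of_lt (tp_pos hlam j))]

/-- The truncated Poisson mass function with rate `λ` and truncation point `A`. -/
noncomputable def truncPoisPMF (lam : ℝ) (A : ℕ) (y : ℕ) : ℝ :=
  (lam ^ y / (Nat.factorial y)) / ∑ j ∈ Finset.range (A + 1), lam ^ j / (Nat.factorial j)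

/-- Underdispersion of the right-truncated Poisson: for rate `λ > 0` and truncation
point `A ≥ 1`, the variance is strictly less than the mean. -/
theorem truncated_poisson_underdispersed (lam : ℝ) (hlam : 0 < lam) (A : ℕ) (hA : 1 ≤ A) :
    (∑ y ∈ Finset.range (A + 1), (y : ℝ) ^ 2 * truncPoisPMF lam A y)
        - (∑ y ∈ Finset.range (A + 1), (y : ℝ) * truncPoisPMF lam A y) ^ 2
      < ∑ y ∈ Finset.range (A + 1), (y : ℝ) * truncPoisPMF lam A y := by
  obtain ⟨B, rfl⟩ : ∃ B, A = B + 1 := ⟨A - 1, by omega⟩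
  have hpmf : ∀ y, truncPoisPMF lam (B + 1) y = tp lam y / ∑ j ∈ range (B + 2), tp lam j := by
    intro y; rfl
  set T := ∑ j ∈ range (B + 2), tp lam j with hTdef
  set S1 := ∑ j ∈ range (B + 1), tp lam j with hS1def
  set S0 := ∑ j ∈ range B, tp lam j with hS0def
  have hT : 0 < T := Finset.sum_pos (fun j _ => tp_pos hlam j) (by simp)
  set Q1 := ∑ y ∈ range (B + 2), (y : ℝ) * tp lam y with hQ1def
  set Q2 := ∑ y ∈ range (B + 2), (y : ℝ) ^ 2 * tp lam y with hQ2def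
  have hm : ∑ y ∈ Finset.range (B + 1 + 1), (y : ℝ) * truncPoisPMF lam (B + 1) y = Q1 / T := by
    rw [hQ1def, Finset.sum_div]
    exact Finset.sum_congr rfl fun y _ => by rw [hpmf y, mul_div_assoc]
  have hm2 : ∑ y ∈ Finset.range (B + 1 + 1), (y : ℝ) ^ 2 * truncPoisPMF lam (B + 1) y = Q2 / T := by
    rw [hQ2def, Finset.sum_div]
    exact Finset.sum_congr rfl fun y _ => by rw [hpmf y, mul_div_assoc]
  rw [hm, hm2]
  have hQ1 : Q1 = lam * S1 := by
    rw [hQ1def, hS1def]; exact sum_shift (B + 1)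
  have hQ21 : Q2 - Q1 = lam ^ 2 * S0 := by
    rw [hQ1def, hQ2def, hS0def, ← Finset.sum_sub_distrib]
    rw [← sum_shift2 B]
    exact Finset.sum_congr rfl fun y _ => by ring
  have lc : S0 * T < S1 ^ 2 := logconcave hlam B
  have key : Q2 * T - Q1 ^ 2 < Q1 * T := by
    have e1 : (Q2 - Q1) * T = lam ^ 2 * S0 * T := by rw [hQ21]
    have e2 : Q1 ^ 2 = lam ^ 2 * S1 ^ 2 := by rw [hQ1]; ring
    nlinarith [mul_lt_mul_of_pos_left lc (pow_pos hlam 2)]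
  rw [div_pow, div_sub_div _ _ (ne_of_gt hT) (by positivity), div_lt_div_iff₀ (by positivity) hT]
  nlinarith [mul_lt_mul_of_pos_right key (mul_pos hT hT), hT]
end
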